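/- Let G be the group of the toroidal hypermap (3,3,3)_{(s,s)}, the quotient of the affine Coxeter group ⟨ρ0,ρ1,ρ2 | ρi² = (ρiρj)³ = 1⟩ by the normal closure of (ρ0ρ1ρ2)^{2s}, and let g = (ρ0ρ1ρ2)², h = g^{ρ0}, j = gh. Then g^{ρ1} = g, g^{ρ2} = j⁻¹, and h^{ρ1} = j⁻¹. -/

import Mathlib

/-- Relations of the affine Coxeter group of type Ã₂ (three involutory generators,
all pairwise products of order 3), together with one extra relator. -/
def triRels (extra : FreeGroup (Fin 3)) : Set (FreeGroup (Fin 3)) :=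
  {r | ∃ i : Fin 3, r = FreeGroup.of i ^ 2} ∪
  {r | ∃ i j : Fin 3, i ≠ j ∧ r = (FreeGroup.of i * FreeGroup.of j) ^ 3} ∪
  {extra}

/-- The free-group word ρ0 ρ1 ρ2 ρ1 (the translation u). -/
def uWord : FreeGroup (Fin 3) :=
  FreeGroup.of 0 * FreeGroup.of 1 * FreeGroup.of 2 * FreeGroup.of 1

/-- The group of the toroidal hypermap (3,3,3)_{(s,0)}. -/
abbrev Hyp0 (s : ℕ) := PresentedGroup (triRels (uWord ^ s))

/-- The group of the toroidal hypermap (3,3,3)_{(s,s)}. -/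
abbrev HypSS (s : ℕ) :=
  PresentedGroup (triRels ((FreeGroup.of 0 * FreeGroup.of 1 * FreeGroup.of 2) ^ (2 * s)))

/-- Conjugation relations (2) for the translations of (3,3,3)_{(s,s)}:
g^{ρ1} = g, g^{ρ2} = j⁻¹ and h^{ρ1} = j⁻¹, where g = (ρ0ρ1ρ2)², h = g^{ρ0}, j = gh. -/
theorem stmt6 (s : ℕ) (hs : 2 ≤ s) :
    let ρ : Fin 3 → HypSS s := fun i => PresentedGroup.of i
    let g : HypSS s := (ρ 0 * ρ 1 * ρ 2) ^ 2
    let h : HypSS s := (ρ 0)⁻¹ * g * ρ 0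
    let j : HypSS s := g * h
    (ρ 1)⁻¹ * g * ρ 1 = g ∧
    (ρ 2)⁻¹ * g * ρ 2 = j⁻¹ ∧
    (ρ 1)⁻¹ * h * ρ 1 = j⁻¹ := by
  intro ρ g h j
  set R := triRels ((FreeGroup.of 0 * FreeGroup.of 1 * FreeGroup.of 2) ^ (2 * s)) with hR
  have hrel : ∀ r ∈ R, PresentedGroup.mk R r = 1 := by
    intro r hr
    exact (QuotientGroup.eq_one_iff r).2 (Subgroup.subset_normalClosure hr)
  have hsq : ∀ i : Fin 3, ρ i * ρ i = 1 := by
    intro i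
    have := hrel (FreeGroup.of i ^ 2) (Or.inl (Or.inl ⟨i, rfl⟩))
    rw [map_pow] at this
    rw [pow_two] at this; exact this
  have hbr3 : ∀ i k : Fin 3, i ≠ k → (ρ i * ρ k) ^ 3 = 1 := by
    intro i k hik
    have := hrel ((FreeGroup.of i * FreeGroup.of k) ^ 3) (Or.inl (Or.inr ⟨i, k, hik, rfl⟩))
    rw [map_pow, map_mul] at this
    exact this
  have hinv : ∀ i : Fin 3, (ρ i)⁻¹ = ρ i := fun i => inv_eq_of_mul_eq_one_right (hsq i)
  have braid : ∀ i k : Fin 3, i ≠ k →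
      ∀ t : HypSS s, ρ i * (ρ k * (ρ i * t)) = ρ k * (ρ i * (ρ k * t)) := by
    intro i k hik t
    have h3 := hbr3 i k hik
    have e : ρ i * ρ k * ρ i = ρ k * ρ i * ρ k := by
      have h1 : ρ i * ρ k * ρ i * (ρ k * ρ i * ρ k) = 1 := by
        have : (ρ i * ρ k) * (ρ i * ρ k) * (ρ i * ρ k) = 1 := by
          simpa [pow_succ, pow_zero, one_mul, mul_assoc] using h3
        simpa [mul_assoc] using this
      have h2 : (ρ k * ρ i * ρ k)⁻¹ = ρ k * ρ i * ρ k := by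
        simp [mul_inv_rev, hinv, mul_assoc]
      calc ρ i * ρ k * ρ i = (ρ k * ρ i * ρ k)⁻¹ := by
            rw [eq_inv_iff_mul_eq_one]; exact h1
        _ = ρ k * ρ i * ρ k := h2
    calc ρ i * (ρ k * (ρ i * t)) = (ρ i * ρ k * ρ i) * t := by simp [mul_assoc]
      _ = (ρ k * ρ i * ρ k) * t := by rw [e]
      _ = ρ k * (ρ i * (ρ k * t)) := by simp [mul_assoc]
  set a := ρ 0 with ha
  set b := ρ 1 with hb
  set c := ρ 2 with hc
  have Ca : ∀ t : HypSS s, a * (a * t) = t := by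
    intro t; rw [← mul_assoc, hsq 0, one_mul]
  have Cb : ∀ t : HypSS s, b * (b * t) = t := by
    intro t; rw [← mul_assoc, hsq 1, one_mul]
  have Cc : ∀ t : HypSS s, c * (c * t) = t := by
    intro t; rw [← mul_assoc, hsq 2, one_mul]
  have Bab : ∀ t : HypSS s, a * (b * (a * t)) = b * (a * (b * t)) := braid 0 1 (by decide)
  have Bac : ∀ t : HypSS s, a * (c * (a * t)) = c * (a * (c * t)) := braid 0 2 (by decide)
  have Bba : ∀ t : HypSS s, b * (a * (b * t)) = a * (b * (a * t)) := braid 1 0 (by decide)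
  have Bbc : ∀ t : HypSS s, b * (c * (b * t)) = c * (b * (c * t)) := braid 1 2 (by decide)
  have Bca : ∀ t : HypSS s, c * (a * (c * t)) = a * (c * (a * t)) := braid 2 0 (by decide)
  have Bcb : ∀ t : HypSS s, c * (b * (c * t)) = b * (c * (b * t)) := braid 2 1 (by decide)
  have e1L : ∀ t : HypSS s, b * (a * (b * (c * (a * (b * (c * (b * (t)))))))) = a * (b * (c * (a * (b * (c * (t)))))) := by
    intro t
    rw [Bba (c * (a * (b * (c * (b * (t)))))), Bac (b * (c * (b * (t)))), Bcb (b * (t)), Cb (t)]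
  have e2L : ∀ t : HypSS s, c * (a * (b * (c * (a * (b * (c * (c * (t)))))))) = c * (a * (b * (c * (a * (b * (t)))))) := by
    intro t
    rw [Cc (t)]
  have e2R : ∀ t : HypSS s, a * (c * (b * (a * (c * (b * (a * (a * (c * (b * (a * (c * (b * (a * (t)))))))))))))) = c * (a * (b * (c * (a * (b * (t)))))) := by
    intro t
    rw [Ca (c * (b * (a * (c * (b * (a * (t))))))), Bcb (b * (a * (c * (b * (a * (t)))))), Cb (a * (c * (b * (a * (t))))), Bba (c * (a * (c * (b * (a * (t)))))), Bac (b * (a * (c * (a * (c * (b * (a * (t)))))))), Bac (c * (b * (a * (t)))), Cc (b * (a * (t))), Bcb (a * (b * (a * (t)))), Bba (a * (t)), Ca (t)]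
  have e3L : ∀ t : HypSS s, b * (a * (a * (b * (c * (a * (b * (c * (a * (b * (t)))))))))) = c * (a * (b * (c * (a * (b * (t)))))) := by
    intro t
    rw [Ca (b * (c * (a * (b * (c * (a * (b * (t)))))))), Cb (c * (a * (b * (c * (a * (b * (t)))))))]
  have key1 := e1L
  have key2 : ∀ t : HypSS s, c * (a * (b * (c * (a * (b * (c * (c * (t)))))))) = a * (c * (b * (a * (c * (b * (a * (a * (c * (b * (a * (c * (b * (a * (t)))))))))))))) := fun t => (e2L t).trans (e2R t).symm
  have key3 : ∀ t : HypSS s, b * (a * (a * (b * (c * (a * (b * (c * (a * (b * (t)))))))))) = a * (c * (b * (a * (c * (b * (a * (a * (c * (b * (a * (c * (b * (a * (t)))))))))))))) := fun t => (e3L t).trans (e2R t).symm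
  have ia : a⁻¹ = a := hinv 0
  have ib : b⁻¹ = b := hinv 1
  have ic : c⁻¹ = c := hinv 2
  refine ⟨?_, ?_, ?_⟩
  · show (ρ 1)⁻¹ * ((ρ 0 * ρ 1 * ρ 2) ^ 2) * ρ 1 = (ρ 0 * ρ 1 * ρ 2) ^ 2
    rw [← ha, ← hb, ← hc, ib]
    have := key1 1
    simp only [mul_one] at this
    simpa [pow_succ, pow_zero, one_mul, mul_assoc] using this
  · show (ρ 2)⁻¹ * ((ρ 0 * ρ 1 * ρ 2) ^ 2) * ρ 2 =
      ((ρ 0 * ρ 1 * ρ 2) ^ 2 * ((ρ 0)⁻¹ * (ρ 0 * ρ 1 * ρ 2) ^ 2 * ρ 0))⁻¹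
    rw [← ha, ← hb, ← hc, ia, ic]
    have := key2 1
    simp only [mul_one] at this
    simpa [pow_succ, pow_zero, one_mul, mul_inv_rev, ia, ib, ic, mul_assoc] using this
  · show (ρ 1)⁻¹ * ((ρ 0)⁻¹ * (ρ 0 * ρ 1 * ρ 2) ^ 2 * ρ 0) * ρ 1 =
      ((ρ 0 * ρ 1 * ρ 2) ^ 2 * ((ρ 0)⁻¹ * (ρ 0 * ρ 1 * ρ 2) ^ 2 * ρ 0))⁻¹
    rw [← ha, ← hb, ← hc, ia, ib]
    have := key3 1
    simp only [mul_one] at this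
    simpa [pow_succ, pow_zero, one_mul, mul_inv_rev, ia, ib, ic, mul_assoc] using this
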